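/- For n ≥ 3, the dihedral group D_{2n} of order 2n is a flower group with pistil the trivial subgroup {1}. Moreover, its set of petals consists of the cyclic rotation subgroup of order n together with exactly n subgroups of order 2, each generated by a reflection. -/

import Mathlib

/-- A cyclic subgroup `C` of `G` is a μ-subgroup if it is not contained in any cyclic
subgroup of `G` other than `C` itself. -/
def IsMuSubgroup {G : Type*} [Group G] (C : Subgroup G) : Prop :=
  IsCyclic ↥C ∧ ∀ K : Subgroup G, IsCyclic ↥K → C ≤ K → C = K

/-- A noncyclic group `G` is a flower group with pistil `C0` if any two distinct
μ-subgroups of `G` intersect exactly in `C0`. -/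
def IsFlowerGroup {G : Type*} [Group G] (C0 : Subgroup G) : Prop :=
  ¬ IsCyclic G ∧
    ∀ C C' : Subgroup G, IsMuSubgroup C → IsMuSubgroup C' → C ≠ C' → C ⊓ C' = C0

open DihedralGroup Subgroup

namespace Stmt17Aux

variable {n : ℕ}

lemma r_one_zpow (k : ℤ) : (r (1 : ZMod n)) ^ k = r (k : ZMod n) := by
  rcases k with k | k
  · simp [zpow_natCast]
  · rw [zpow_negSucc, r_one_pow]
    apply inv_eq_of_mul_eq_one_left
    rw [r_mul_r, one_def]
    congr 1
    push_cast
    ring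

lemma mem_zpowers_r_one_iff {x : DihedralGroup n} :
    x ∈ zpowers (r (1 : ZMod n)) ↔ ∃ j : ZMod n, x = r j := by
  constructor
  · rintro ⟨k, rfl⟩
    exact ⟨(k : ZMod n), by simpa using (r_one_zpow k)⟩
  · rintro ⟨j, rfl⟩
    obtain ⟨k, rfl⟩ := ZMod.intCast_surjective j
    exact ⟨k, by simpa using r_one_zpow k⟩

lemma mem_zpowers_sr_iff {i : ZMod n} {x : DihedralGroup n} :
    x ∈ zpowers (sr i) ↔ x = 1 ∨ x = sr i := by
  constructor
  · rintro ⟨k, rfl⟩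
    show (sr i) ^ k = 1 ∨ (sr i) ^ k = sr i
    have h2 : (sr i) ^ (2 : ℤ) = 1 := by
      rw [show (2:ℤ) = 1 + 1 by ring, zpow_add, zpow_one, sr_mul_self]
    have hk : (sr i) ^ k = (sr i) ^ (k % 2) := by
      conv_lhs => rw [← Int.emod_add_mul_ediv k 2]
      rw [zpow_add, zpow_mul, h2, one_zpow, mul_one]
    rcases Int.emod_two_eq k with h | h <;> rw [hk, h] <;> simp
  · rintro (rfl | rfl)
    · exact one_mem _
    · exact mem_zpowers _

lemma exists_zpowers {C : Subgroup (DihedralGroup n)} (hC : IsCyclic ↥C) :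
    ∃ g : DihedralGroup n, C = zpowers g := by
  obtain ⟨⟨g, hg⟩, hgen⟩ := hC.exists_generator
  refine ⟨g, le_antisymm ?_ (zpowers_le.mpr hg)⟩
  intro x hx
  obtain ⟨k, hk⟩ := hgen ⟨x, hx⟩
  exact ⟨k, congrArg Subtype.val hk⟩

lemma isCyclic_zpowers (g : DihedralGroup n) : IsCyclic (zpowers g) := by
  refine ⟨⟨⟨g, mem_zpowers g⟩, ?_⟩⟩
  rintro ⟨x, k, rfl⟩
  exact ⟨k, Subtype.ext (by simp)⟩

lemma zpowers_r_le : ∀ i : ZMod n, zpowers (r i) ≤ zpowers (r (1 : ZMod n)) := by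
  intro i
  rw [zpowers_le, mem_zpowers_r_one_iff]
  exact ⟨i, rfl⟩

lemma sr_not_mem_zpowers_r (i j : ZMod n) : sr i ∉ zpowers (r j) := by
  intro hmem
  have h : sr i ∈ zpowers (r (1 : ZMod n)) := zpowers_r_le j hmem
  rw [mem_zpowers_r_one_iff] at h
  obtain ⟨m, hm⟩ := h
  exact absurd hm (by simp)

lemma mu_sr (i : ZMod n) : IsMuSubgroup (zpowers (sr i)) := by
  refine ⟨isCyclic_zpowers _, fun K hK hle => ?_⟩
  obtain ⟨g, rfl⟩ := exists_zpowers hK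
  have hsr : sr i ∈ zpowers g := hle (mem_zpowers _)
  cases g with
  | r j => exact absurd hsr (sr_not_mem_zpowers_r i j)
  | sr j =>
    rcases mem_zpowers_sr_iff.mp hsr with h | h
    · exact absurd h (by rw [one_def]; intro h'; cases h')
    · rw [sr.inj h]

lemma mu_r_one (hn : 2 ≤ n) : IsMuSubgroup (zpowers (r (1 : ZMod n))) := by
  haveI : Fact (1 < n) := ⟨by omega⟩
  refine ⟨isCyclic_zpowers _, fun K hK hle => ?_⟩
  obtain ⟨g, rfl⟩ := exists_zpowers hK
  cases g with
  | r j => exact le_antisymm hle (zpowers_r_le j)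
  | sr j =>
    have hr : r (1 : ZMod n) ∈ zpowers (sr j) := hle (mem_zpowers _)
    rcases mem_zpowers_sr_iff.mp hr with h | h
    · rw [one_def] at h
      exact absurd (r.inj h) one_ne_zero
    · exact absurd h (by simp)

lemma sr_inj_of_zpowers {i j : ZMod n} (h : zpowers (sr i) = zpowers (sr j)) : i = j := by
  have : sr i ∈ zpowers (sr j) := h ▸ mem_zpowers (sr i)
  rcases mem_zpowers_sr_iff.mp this with h1 | h1
  · exact absurd h1 (by rw [one_def]; intro h'; cases h')
  · exact sr.inj h1

end Stmt17Aux

open Stmt17Aux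

/-- For n ≥ 3, the dihedral group D_{2n} is a flower group with pistil the
trivial subgroup; its petals are the rotation subgroup ⟨r⟩ of order n together with the
n subgroups ⟨sr i⟩ of order 2 generated by the reflections. -/
theorem stmt17 (n : ℕ) (hn : 3 ≤ n) :
    IsFlowerGroup (⊥ : Subgroup (DihedralGroup n)) ∧
    (∀ C : Subgroup (DihedralGroup n), IsMuSubgroup C ↔
      C = Subgroup.zpowers (DihedralGroup.r (1 : ZMod n)) ∨
      ∃ i : ZMod n, C = Subgroup.zpowers (DihedralGroup.sr i)) ∧
    Nat.card (Subgroup.zpowers (DihedralGroup.r (1 : ZMod n))) = n ∧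
    (∀ i : ZMod n, Nat.card (Subgroup.zpowers (DihedralGroup.sr i)) = 2) ∧
    (∀ i : ZMod n, orderOf (DihedralGroup.sr i) = 2) ∧
    Function.Injective (fun i : ZMod n => Subgroup.zpowers (DihedralGroup.sr i)) := by
  haveI : NeZero n := ⟨by omega⟩
  have hchar : ∀ C : Subgroup (DihedralGroup n), IsMuSubgroup C ↔
      C = Subgroup.zpowers (DihedralGroup.r (1 : ZMod n)) ∨
      ∃ i : ZMod n, C = Subgroup.zpowers (DihedralGroup.sr i) := by
    intro C
    constructor
    · rintro ⟨hcyc, hmax⟩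
      obtain ⟨g, rfl⟩ := exists_zpowers hcyc
      cases g with
      | r j =>
        left
        exact hmax _ (Stmt17Aux.isCyclic_zpowers _) (zpowers_r_le j)
      | sr j => exact Or.inr ⟨j, rfl⟩
    · rintro (rfl | ⟨i, rfl⟩)
      · exact mu_r_one (by omega)
      · exact mu_sr i
  have hinterRS : ∀ i : ZMod n,
      zpowers (r (1 : ZMod n)) ⊓ zpowers (sr i) = ⊥ := by
    intro i
    rw [eq_bot_iff]
    rintro x ⟨hx1, hx2⟩
    rcases mem_zpowers_sr_iff.mp hx2 with rfl | rfl
    · exact one_mem _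
    · exact absurd hx1 (sr_not_mem_zpowers_r i 1)
  refine ⟨⟨?_, ?_⟩, hchar, ?_, ?_, fun i => orderOf_sr i, ?_⟩
  · -- not cyclic
    intro h
    obtain ⟨g, hg⟩ := h.exists_generator
    obtain ⟨a, ha⟩ := hg (sr (0 : ZMod n))
    obtain ⟨b, hb⟩ := hg (r (1 : ZMod n))
    have hcomm : sr (0 : ZMod n) * r 1 = r 1 * sr (0 : ZMod n) := by
      rw [← ha, ← hb, ← zpow_add, ← zpow_add, add_comm]
    rw [sr_mul_r, r_mul_sr] at hcomm
    have h1 : (0 + 1 : ZMod n) = 0 - 1 := sr.inj hcomm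
    have h2 : ((2 : ℕ) : ZMod n) = 0 := by
      have : (1 : ZMod n) + 1 = 0 := by linear_combination h1
      push_cast
      linear_combination this
    rw [ZMod.natCast_eq_zero_iff] at h2
    have := Nat.le_of_dvd (by norm_num) h2
    omega
  · -- intersections
    intro C C' hC hC' hne
    rcases (hchar C).mp hC with rfl | ⟨i, rfl⟩ <;>
      rcases (hchar C').mp hC' with rfl | ⟨j, rfl⟩
    · exact absurd rfl hne
    · exact hinterRS j
    · rw [inf_comm]; exact hinterRS i
    · have hij : i ≠ j := fun h => hne (by rw [h])
      rw [eq_bot_iff]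
      rintro x ⟨hx1, hx2⟩
      rcases mem_zpowers_sr_iff.mp hx1 with rfl | rfl
      · exact one_mem _
      · rcases mem_zpowers_sr_iff.mp hx2 with h | h
        · exact absurd h (by rw [one_def]; intro h'; cases h')
        · exact absurd (sr.inj h) hij
  · rw [Nat.card_zpowers, orderOf_r_one]
  · intro i
    rw [Nat.card_zpowers, orderOf_sr]
  · intro i j h
    exact sr_inj_of_zpowers h
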